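/- Let D^{(0)}, D^{(1)}, D^{(2)}, D^{(3)} be the matrices over U(𝔤_t) given in the Engel Rumin complex: D^{(0)} = (X1, X2, 0, 0)ᵀ; D^{(1)} is the 6×4 matrix whose only nonzero rows are row 3 = (−X2², X2X1−X3, 0, 0) and row 4 = (−X4−(X1²X2+X1X3)/t, X1³/t, 0, 0); D^{(2)} is the 4×6 matrix whose only nonzero rows are row 3 = (0,0, X1³/t, −X3−X1X2, 0,0) and row 4 = (0,0, (X1²X2−3X3X1)/t, −X2², 0,0); D^{(3)} = (0, 0, −X2, X1). Then D^{(1)}·D^{(0)} = 0, D^{(2)}·D^{(1)} = 0, and D^{(3)}·D^{(2)} = 0 (i.e., D∘D = 0 for the Rumin differential of the Engel group). -/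

import Mathlib

/-- The underlying type of the Engel Lie algebra `𝔤_t`. -/
def EngelAlg (_t : ℝ) : Type := Fin 4 → ℝ

noncomputable instance (t : ℝ) : AddCommGroup (EngelAlg t) :=
  inferInstanceAs (AddCommGroup (Fin 4 → ℝ))

noncomputable instance (t : ℝ) : Module ℝ (EngelAlg t) :=
  inferInstanceAs (Module ℝ (Fin 4 → ℝ))


@[simp] lemma EngelAlg.add_apply {t : ℝ} (x y : EngelAlg t) (i : Fin 4) :
    (x + y) i = x i + y i := rfl
@[simp] lemma EngelAlg.smul_apply {t : ℝ} (r : ℝ) (x : EngelAlg t) (i : Fin 4) :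
    (r • x) i = r * x i := rfl
@[simp] lemma EngelAlg.zero_apply {t : ℝ} (i : Fin 4) : (0 : EngelAlg t) i = 0 := rfl

/-- The Engel bracket: `[X1,X2] = X3`, `[X1,X3] = t·X4`. -/
def engelBracket (t : ℝ) (x y : Fin 4 → ℝ) : Fin 4 → ℝ := fun i =>
  if i = 2 then x 0 * y 1 - x 1 * y 0
  else if i = 3 then t * (x 0 * y 2 - x 2 * y 0) else 0

noncomputable instance (t : ℝ) : LieRing (EngelAlg t) where
  bracket x y := engelBracket t x y
  add_lie x y z := by
    funext i; change _ = engelBracket t x z i + engelBracket t y z i; fin_cases i <;>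
      simp [engelBracket, EngelAlg.add_apply, EngelAlg.zero_apply, Pi.add_apply, Pi.zero_apply] <;> ring
  lie_add x y z := by
    funext i; change _ = engelBracket t x y i + engelBracket t x z i; fin_cases i <;>
      simp [engelBracket, EngelAlg.add_apply, EngelAlg.zero_apply, Pi.add_apply, Pi.zero_apply] <;> ring
  lie_self x := by
    funext i; fin_cases i <;>
      simp [engelBracket, EngelAlg.zero_apply, Pi.zero_apply, mul_comm, sub_self]
  leibniz_lie x y z := by
    funext i; change _ = engelBracket t (engelBracket t x y) z i + engelBracket t y (engelBracket t x z) i; fin_cases i <;>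
      simp [engelBracket, EngelAlg.add_apply, EngelAlg.zero_apply, Pi.add_apply, Pi.zero_apply] <;> ring

noncomputable instance (t : ℝ) : LieAlgebra ℝ (EngelAlg t) where
  lie_smul r x y := by
    funext i; change _ = r * engelBracket t x y i; fin_cases i <;>
      simp [Bracket.bracket, engelBracket, EngelAlg.smul_apply, EngelAlg.zero_apply, Pi.smul_apply, smul_eq_mul] <;> ring

/-- The canonical basis vectors `X1, X2, X3, X4` (indexed by `Fin 4`). -/
noncomputable def X (t : ℝ) (i : Fin 4) : EngelAlg t := Pi.single i 1


/-- The universal enveloping algebra `U(𝔤_t)`. -/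
noncomputable abbrev UEngel (t : ℝ) := UniversalEnvelopingAlgebra ℝ (EngelAlg t)

/-- The images `X1, X2, X3, X4` of the canonical basis in `U(𝔤_t)`
(indexed by `Fin 4`). -/
noncomputable def XU (t : ℝ) (i : Fin 4) : UEngel t :=
  UniversalEnvelopingAlgebra.ι ℝ (X t i)

open Matrix

section EngelAux

attribute [local instance] LieRing.ofAssociativeRing

lemma engel_bracketXX (t : ℝ) (i j : Fin 4) :
    ⁅X t i, X t j⁆ = engelBracket t (X t i) (X t j) := rfl

lemma engel_br01 (t : ℝ) : ⁅X t 0, X t 1⁆ = X t 2 := by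
  rw [engel_bracketXX]; funext i; fin_cases i <;>
    simp [engelBracket, X, Pi.single_apply]

lemma engel_br02 (t : ℝ) : ⁅X t 0, X t 2⁆ = t • X t 3 := by
  rw [engel_bracketXX]; funext i; change _ = t * X t 3 i; fin_cases i <;>
    simp [engelBracket, X, Pi.single_apply]

lemma engel_br03 (t : ℝ) : ⁅X t 0, X t 3⁆ = 0 := by
  rw [engel_bracketXX]; funext i; fin_cases i <;>
    simp [engelBracket, X, Pi.single_apply]

lemma engel_br12 (t : ℝ) : ⁅X t 1, X t 2⁆ = 0 := by
  rw [engel_bracketXX]; funext i; fin_cases i <;>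
    simp [engelBracket, X, Pi.single_apply]

lemma engel_br13 (t : ℝ) : ⁅X t 1, X t 3⁆ = 0 := by
  rw [engel_bracketXX]; funext i; fin_cases i <;>
    simp [engelBracket, X, Pi.single_apply]

lemma engel_br23 (t : ℝ) : ⁅X t 2, X t 3⁆ = 0 := by
  rw [engel_bracketXX]; funext i; fin_cases i <;>
    simp [engelBracket, X, Pi.single_apply]

lemma engel_comm_of_br {t : ℝ} (i j : Fin 4) (v : EngelAlg t) (h : ⁅X t i, X t j⁆ = v) :
    XU t i * XU t j = XU t j * XU t i + UniversalEnvelopingAlgebra.ι ℝ v := by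
  have := (UniversalEnvelopingAlgebra.ι ℝ (L := EngelAlg t)).map_lie (X t i) (X t j)
  rw [h, Ring.lie_def] at this
  simp only [XU, this]; abel

lemma engel_comm12 (t : ℝ) : XU t 0 * XU t 1 = XU t 1 * XU t 0 + XU t 2 :=
  engel_comm_of_br 0 1 _ (engel_br01 t)
lemma engel_comm13 (t : ℝ) : XU t 0 * XU t 2 = XU t 2 * XU t 0 + t • XU t 3 := by
  have := engel_comm_of_br 0 2 _ (engel_br02 t)
  rwa [map_smul] at this
lemma engel_comm14 (t : ℝ) : XU t 0 * XU t 3 = XU t 3 * XU t 0 := by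
  have := engel_comm_of_br 0 3 _ (engel_br03 t)
  rwa [map_zero, add_zero] at this
lemma engel_comm23 (t : ℝ) : XU t 1 * XU t 2 = XU t 2 * XU t 1 := by
  have := engel_comm_of_br 1 2 _ (engel_br12 t)
  rwa [map_zero, add_zero] at this
lemma engel_comm24 (t : ℝ) : XU t 1 * XU t 3 = XU t 3 * XU t 1 := by
  have := engel_comm_of_br 1 3 _ (engel_br13 t)
  rwa [map_zero, add_zero] at this
lemma engel_comm34 (t : ℝ) : XU t 2 * XU t 3 = XU t 3 * XU t 2 := by
  have := engel_comm_of_br 2 3 _ (engel_br23 t)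
  rwa [map_zero, add_zero] at this

lemma fin6_5 : (5 : Fin 6) = Fin.succ 4 := rfl
lemma fin6_4 : (4 : Fin 6) = Fin.succ 3 := rfl
lemma fin6_3 : (3 : Fin 6) = Fin.succ 2 := rfl
lemma fin6_2 : (2 : Fin 6) = Fin.succ 1 := rfl
lemma fin5_4 : (4 : Fin 5) = Fin.succ 3 := rfl
lemma fin5_3 : (3 : Fin 5) = Fin.succ 2 := rfl
lemma fin5_2 : (2 : Fin 5) = Fin.succ 1 := rfl
lemma fin4_3 : (3 : Fin 4) = Fin.succ 2 := rfl
lemma fin4_2 : (2 : Fin 4) = Fin.succ 1 := rfl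
lemma fin3_2 : (2 : Fin 3) = Fin.succ 1 := rfl

end EngelAux


set_option maxHeartbeats 1600000 in
/-- The Rumin differential matrices `D^{(k)}` of the Engel group satisfy `D ∘ D = 0`:
`D^{(1)}·D^{(0)} = 0`, `D^{(2)}·D^{(1)} = 0`, `D^{(3)}·D^{(2)} = 0`. -/
theorem engel_rumin_D_squared_zero (t : ℝ) (ht : t ≠ 0) :
    let X1 := XU t 0; let X2 := XU t 1; let X3 := XU t 2; let X4 := XU t 3
    let D0 : Matrix (Fin 4) (Fin 1) (UEngel t) := !![X1; X2; 0; 0]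
    let D1 : Matrix (Fin 6) (Fin 4) (UEngel t) :=
      !![0, 0, 0, 0;
         0, 0, 0, 0;
         -X2 ^ 2, X2 * X1 - X3, 0, 0;
         -X4 - t⁻¹ • (X1 ^ 2 * X2 + X1 * X3), t⁻¹ • X1 ^ 3, 0, 0;
         0, 0, 0, 0;
         0, 0, 0, 0]
    let D2 : Matrix (Fin 4) (Fin 6) (UEngel t) :=
      !![0, 0, 0, 0, 0, 0;
         0, 0, 0, 0, 0, 0;
         0, 0, t⁻¹ • X1 ^ 3, -X3 - X1 * X2, 0, 0;
         0, 0, t⁻¹ • (X1 ^ 2 * X2 - 3 * (X3 * X1)), -X2 ^ 2, 0, 0]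
    let D3 : Matrix (Fin 1) (Fin 4) (UEngel t) := !![0, 0, -X2, X1]
    D1 * D0 = 0 ∧ D2 * D1 = 0 ∧ D3 * D2 = 0 := by
  intro X1 X2 X3 X4 D0 D1 D2 D3
  have r12 : X1 * X2 = X2 * X1 + X3 := engel_comm12 t
  have r13 : X1 * X3 = X3 * X1 + t • X4 := engel_comm13 t
  have r14 : X1 * X4 = X4 * X1 := engel_comm14 t
  have r23 : X2 * X3 = X3 * X2 := engel_comm23 t
  have r24 : X2 * X4 = X4 * X2 := engel_comm24 t
  have r34 : X3 * X4 = X4 * X3 := engel_comm34 t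
  have r12' : ∀ a, X1 * (X2 * a) = X2 * (X1 * a) + X3 * a := fun a => by
    rw [← mul_assoc, r12, add_mul, mul_assoc]
  have r13' : ∀ a, X1 * (X3 * a) = X3 * (X1 * a) + t • (X4 * a) := fun a => by
    rw [← mul_assoc, r13, add_mul, smul_mul_assoc, mul_assoc]
  have r14' : ∀ a, X1 * (X4 * a) = X4 * (X1 * a) := fun a => by
    rw [← mul_assoc, r14, mul_assoc]
  have r23' : ∀ a, X2 * (X3 * a) = X3 * (X2 * a) := fun a => by
    rw [← mul_assoc, r23, mul_assoc]
  have r24' : ∀ a, X2 * (X4 * a) = X4 * (X2 * a) := fun a => by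
    rw [← mul_assoc, r24, mul_assoc]
  have r34' : ∀ a, X3 * (X4 * a) = X4 * (X3 * a) := fun a => by
    rw [← mul_assoc, r34, mul_assoc]
  have h3 : ∀ a : UEngel t, (3 : UEngel t) * a = (3:ℝ) • a := fun a => by
    rw [Algebra.smul_def, map_ofNat]
  refine ⟨?_, ?_, ?_⟩
  · ext i j
    fin_cases i <;> fin_cases j <;>
      simp [D0, D1, Matrix.mul_apply, Fin.sum_univ_four, pow_succ,
        fin6_5, fin6_4, fin6_3, fin6_2, fin5_4, fin5_3, fin5_2, fin4_3, fin4_2, fin3_2,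
        Matrix.cons_val_succ, Matrix.vecHead, Matrix.vecTail, Function.comp] <;>
    · try simp only [h3, sub_mul, neg_mul, add_mul, smul_mul_assoc, mul_assoc, mul_neg, neg_neg,
        r12, r12', r13, r13', r14, r14', r23, r23', r24, r24', r34, r34',
        mul_add, mul_sub, smul_add, smul_smul, smul_sub, mul_smul_comm, smul_neg]
      match_scalars <;> (try field_simp) <;> ring
  · ext i j
    fin_cases i <;> fin_cases j <;>
      simp [D1, D2, Matrix.mul_apply, Fin.sum_univ_six, pow_succ,
        fin6_5, fin6_4, fin6_3, fin6_2, fin5_4, fin5_3, fin5_2, fin4_3, fin4_2, fin3_2,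
        Matrix.cons_val_succ, Matrix.vecHead, Matrix.vecTail, Function.comp] <;>
    · try simp only [h3, sub_mul, neg_mul, add_mul, smul_mul_assoc, mul_assoc, mul_neg, neg_neg,
        r12, r12', r13, r13', r14, r14', r23, r23', r24, r24', r34, r34',
        mul_add, mul_sub, smul_add, smul_smul, smul_sub, mul_smul_comm, smul_neg]
      match_scalars <;> (try field_simp) <;> ring
  · ext i j
    fin_cases i <;> fin_cases j <;>
      simp [D2, D3, Matrix.mul_apply, Fin.sum_univ_four, pow_succ,
        fin6_5, fin6_4, fin6_3, fin6_2, fin5_4, fin5_3, fin5_2, fin4_3, fin4_2, fin3_2,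
        Matrix.cons_val_succ, Matrix.vecHead, Matrix.vecTail, Function.comp] <;>
    · try simp only [h3, sub_mul, neg_mul, add_mul, smul_mul_assoc, mul_assoc, mul_neg, neg_neg,
        r12, r12', r13, r13', r14, r14', r23, r23', r24, r24', r34, r34',
        mul_add, mul_sub, smul_add, smul_smul, smul_sub, mul_smul_comm, smul_neg]
      match_scalars <;> (try field_simp) <;> ring
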